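/- arXiv:2501.11002 — 4 statements merged into one kernel-verified Lean document; each statement's English description precedes it below -/
import Mathlib

section
/- Let E be a real Hilbert space (e.g. EuclideanSpace ℝ (Fin d)), F : E → ℝ differentiable with gradient ∇F that is L-Lipschitz (L ≥ 0). Fix θ ∈ E and η ∈ ℝ with η ≥ 0. Let (Ω, ℙ) be a probability space and g : Ω → E an integrable random vector such that E[g] = ∇F(θ) and E[‖g − ∇F(θ)‖²] ≤ σ². Then E[F(θ − η • g)] ≤ F(θ) − (η − L·η²/2)·‖∇F(θ)‖² + (L·η²/2)·σ². -/
open MeasureTheory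

lemma descent_aux {E : Type*} [NormedAddCommGroup E] [InnerProductSpace ℝ E] [CompleteSpace E]
    (F : E → ℝ) (hF : Differentiable ℝ F)
    (L : ℝ)
    (hlip : ∀ x y : E, ‖gradient F x - gradient F y‖ ≤ L * ‖x - y‖)
    (x v : E) :
    F (x + v) ≤ F x + inner ℝ (gradient F x) v + L / 2 * ‖v‖ ^ 2 := by
  set c : ℝ := inner ℝ (gradient F x) v with hc
  have hder : ∀ t : ℝ, HasDerivAt (fun t : ℝ => F (x + t • v))
      (inner ℝ (gradient F (x + t • v)) v : ℝ) t := by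
    intro t
    have h1 : HasDerivAt (fun t : ℝ => x + t • v) v t := by
      simpa using ((hasDerivAt_id t).smul_const v).const_add x
    have h2 := (hF (x + t • v)).hasGradientAt.hasFDerivAt.comp_hasDerivAt t h1
    exact h2.congr_deriv (by simp)
  set φ : ℝ → ℝ := fun t => F (x + t • v) - t * c - L * t ^ 2 / 2 * ‖v‖ ^ 2 with hφ
  have hφder : ∀ t : ℝ, HasDerivAt φ
      ((inner ℝ (gradient F (x + t • v)) v : ℝ) - c - L * t * ‖v‖ ^ 2) t := by
    intro t
    have : HasDerivAt (fun t : ℝ => L * t ^ 2 / 2 * ‖v‖ ^ 2) (L * t * ‖v‖ ^ 2) t := by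
      have := ((hasDerivAt_pow 2 t).const_mul L).div_const 2 |>.mul_const (‖v‖ ^ 2)
      exact this.congr_deriv (by push_cast; ring)
    exact (((hder t).sub ((hasDerivAt_id t).mul_const c)).sub this).congr_deriv (by simp)
  have hanti : AntitoneOn φ (Set.Icc 0 1) := by
    apply antitoneOn_of_deriv_nonpos (convex_Icc 0 1)
    · exact (Differentiable.continuous fun t => (hφder t).differentiableAt).continuousOn
    · intro t ht
      exact (hφder t).differentiableAt.differentiableWithinAt
    · intro t ht
      rw [(hφder t).deriv]
      rw [interior_Icc, Set.mem_Ioo] at ht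
      have h1 : (inner ℝ (gradient F (x + t • v)) v : ℝ) - c
          = inner ℝ (gradient F (x + t • v) - gradient F x) v := by
        rw [inner_sub_left, hc]
      rw [h1]
      have h2 : (inner ℝ (gradient F (x + t • v) - gradient F x) v : ℝ)
          ≤ L * t * ‖v‖ ^ 2 := by
        calc (inner ℝ (gradient F (x + t • v) - gradient F x) v : ℝ)
            ≤ ‖gradient F (x + t • v) - gradient F x‖ * ‖v‖ := real_inner_le_norm _ _
          _ ≤ (L * ‖(x + t • v) - x‖) * ‖v‖ := by
              exact mul_le_mul_of_nonneg_right (hlip _ _) (norm_nonneg _)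
          _ = L * t * ‖v‖ ^ 2 := by
              rw [add_sub_cancel_left, norm_smul, Real.norm_eq_abs,
                abs_of_nonneg ht.1.le]; ring
      linarith
  have := hanti (Set.left_mem_Icc.2 one_pos.le) (Set.right_mem_Icc.2 one_pos.le) one_pos.le
  simp only [hφ, zero_smul, one_smul, add_zero, zero_mul, mul_zero, sub_zero, one_pow,
    mul_one, zero_pow] at this
  -- this : F (x + v) - 1 * c - L * 1/2 * ‖v‖^2 ≤ F x  (roughly)
  nlinarith [this]

/-- Smoothness-based expected decrease for one stochastic gradient step:
if `F` is differentiable with `L`-Lipschitz gradient and `g` is an unbiased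
stochastic gradient at `θ` with variance at most `σ²`, then a step of size
`η ≥ 0` satisfies
`E[F(θ - η g)] ≤ F(θ) - (η - L η²/2) ‖∇F(θ)‖² + (L η²/2) σ²`. -/
theorem expected_descent_one_step
    {E : Type*} [NormedAddCommGroup E] [InnerProductSpace ℝ E] [CompleteSpace E]
    (F : E → ℝ) (hF : Differentiable ℝ F)
    (L : ℝ) (hL : 0 ≤ L)
    (hlip : ∀ x y : E, ‖gradient F x - gradient F y‖ ≤ L * ‖x - y‖)
    (θ : E) (η : ℝ) (hη : 0 ≤ η)
    {Ωs : Type*} [MeasureSpace Ωs]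
    (hprob : IsProbabilityMeasure (volume : Measure Ωs))
    (g : Ωs → E) (σ : ℝ)
    (hg_int : Integrable g)
    (hg_sq_int : Integrable (fun ω => ‖g ω - gradient F θ‖ ^ 2))
    (hF_int : Integrable (fun ω => F (θ - η • g ω)))
    (hg_mean : ∫ ω, g ω = gradient F θ)
    (hg_var : ∫ ω, ‖g ω - gradient F θ‖ ^ 2 ≤ σ ^ 2) :
    ∫ ω, F (θ - η • g ω)
      ≤ F θ - (η - L * η ^ 2 / 2) * ‖gradient F θ‖ ^ 2 + (L * η ^ 2 / 2) * σ ^ 2 := by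
  set c : E := gradient F θ with hcdef
  have hbound : ∀ ω, F (θ - η • g ω)
      ≤ F θ - η * inner ℝ c (g ω) + L * η ^ 2 / 2 * ‖g ω‖ ^ 2 := by
    intro ω
    have hd := descent_aux F hF L hlip θ (-(η • g ω))
    have e1 : θ + -(η • g ω) = θ - η • g ω := by rw [← sub_eq_add_neg]
    rw [e1] at hd
    have h2 : (inner ℝ c (-(η • g ω)) : ℝ) = -(η * inner ℝ c (g ω)) := by
      rw [inner_neg_right, real_inner_smul_right]
    have h3 : ‖-(η • g ω)‖ ^ 2 = η ^ 2 * ‖g ω‖ ^ 2 := by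
      rw [norm_neg, norm_smul, mul_pow, Real.norm_eq_abs, sq_abs]
    rw [h2, h3] at hd
    nlinarith [hd]
  have hinner_int : Integrable (fun ω => (inner ℝ c (g ω) : ℝ)) := hg_int.const_inner c
  have hgc_int : Integrable (fun ω => g ω - c) := hg_int.sub (integrable_const c)
  have hsq_eq : (fun ω => ‖g ω‖ ^ 2)
      = fun ω => ‖g ω - c‖ ^ 2 + (2 * inner ℝ (g ω - c) c + ‖c‖ ^ 2) := by
    funext ω
    have h := norm_add_sq_real (g ω - c) c
    rw [sub_add_cancel] at h
    rw [h]; ring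
  have hsq_int : Integrable (fun ω => ‖g ω‖ ^ 2) := by
    rw [hsq_eq]
    exact hg_sq_int.add (((hgc_int.inner_const c).const_mul 2).add (integrable_const _))
  have hrhs_int : Integrable
      (fun ω => F θ - η * inner ℝ c (g ω) + L * η ^ 2 / 2 * ‖g ω‖ ^ 2) :=
    ((integrable_const (F θ)).sub (hinner_int.const_mul η)).add (hsq_int.const_mul _)
  have hmono := integral_mono hF_int hrhs_int hbound
  have e_inner : ∫ ω, (inner ℝ c (g ω) : ℝ) = ‖c‖ ^ 2 := by
    rw [integral_inner hg_int, hg_mean]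
    exact real_inner_self_eq_norm_sq c
  have e_gc : ∫ ω, (inner ℝ (g ω - c) c : ℝ) = 0 := by
    have e0 : ∫ ω, (g ω - c) = 0 := by
      rw [integral_sub hg_int (integrable_const c), hg_mean, integral_const]
      simp
    calc ∫ ω, (inner ℝ (g ω - c) c : ℝ) = ∫ ω, (inner ℝ c (g ω - c) : ℝ) := by
          simp_rw [real_inner_comm]
      _ = inner ℝ c (∫ ω, (g ω - c)) := integral_inner hgc_int c
      _ = 0 := by rw [e0, inner_zero_right]
  have hA : Integrable (fun ω => 2 * (inner ℝ (g ω - c) c : ℝ)) := by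
    exact (hgc_int.inner_const c).const_mul 2
  have hB : Integrable (fun ω => 2 * (inner ℝ (g ω - c) c : ℝ) + ‖c‖ ^ 2) := by
    exact hA.add (integrable_const _)
  have e_sq : ∫ ω, ‖g ω‖ ^ 2 ≤ σ ^ 2 + ‖c‖ ^ 2 := by
    rw [hsq_eq, integral_add hg_sq_int hB, integral_add hA (integrable_const _),
      integral_const_mul, e_gc, integral_const]
    simp only [mul_zero, zero_add, measure_univ, probReal_univ, ENNReal.toReal_one, one_smul, smul_eq_mul,
      one_mul]
    linarith
  have e_rhs : ∫ ω, (F θ - η * inner ℝ c (g ω) + L * η ^ 2 / 2 * ‖g ω‖ ^ 2)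
      = F θ - η * ‖c‖ ^ 2 + L * η ^ 2 / 2 * ∫ ω, ‖g ω‖ ^ 2 := by
    have hC : Integrable (fun ω => η * (inner ℝ c (g ω) : ℝ)) := by
      exact hinner_int.const_mul η
    have hD : Integrable (fun ω => F θ - η * (inner ℝ c (g ω) : ℝ)) := by
      exact (integrable_const (F θ)).sub hC
    have hE : Integrable (fun ω => L * η ^ 2 / 2 * ‖g ω‖ ^ 2) := by
      exact hsq_int.const_mul _
    rw [integral_add hD hE, integral_sub (integrable_const (F θ)) hC,
      integral_const_mul, integral_const_mul, e_inner, integral_const]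
    simp
  rw [e_rhs] at hmono
  have hcoef : 0 ≤ L * η ^ 2 / 2 := by positivity
  nlinarith [mul_le_mul_of_nonneg_left e_sq hcoef]
end

section
/- Let E be a real Hilbert space, F : E → ℝ differentiable with L-Lipschitz gradient (L > 0) and bounded below by F* (F(x) ≥ F* for all x). Fix a constant effective step size η with 0 < η ≤ 1/L and T ≥ 1. Let (Ω, ℙ) be a probability space with random vectors θ^0, θ^1, …, θ^T : Ω → E and g^0, …, g^{T−1} : Ω → E such that for every t < T: θ^{t+1} = θ^t − η • g^t, the conditional expectation of g^t given σ(θ^0,…,θ^t) equals ∇F(θ^t) almost surely, and E[‖g^t − ∇F(θ^t)‖² | σ(θ^0,…,θ^t)] ≤ σ² almost surely (all stated integrability holding). Then (1/T)·∑_{t=0}^{T−1} E[‖∇F(θ^t)‖²] ≤ 2(E[F(θ^0)] − F*)/(T·η) + L·η·σ². -/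
open MeasureTheory Finset
open scoped RealInnerProductSpace

private lemma smooth_descent {E : Type*} [NormedAddCommGroup E] [InnerProductSpace ℝ E]
    [CompleteSpace E]
    (F : E → ℝ) (hF : Differentiable ℝ F) (L : ℝ) (hL : 0 ≤ L)
    (hlip : ∀ x y : E, ‖gradient F x - gradient F y‖ ≤ L * ‖x - y‖)
    (x y : E) :
    F y ≤ F x + ⟪gradient F x, y - x⟫ + L / 2 * ‖y - x‖ ^ 2 := by
  set v := y - x with hv
  have hderiv : ∀ t : ℝ,
      HasDerivAt (fun s : ℝ => F (x + s • v)) ⟪gradient F (x + t • v), v⟫ t := by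
    intro t
    have h1 : HasDerivAt (fun s : ℝ => x + s • v) v t := by
      simpa using ((hasDerivAt_id t).smul_const v).const_add x
    have h2 : HasFDerivAt F (InnerProductSpace.toDual ℝ E (gradient F (x + t • v)))
        (x + t • v) := hasGradientAt_iff_hasFDerivAt.mp (hF _).hasGradientAt
    simpa [Function.comp_def] using h2.comp_hasDerivAt t h1
  set ψ : ℝ → ℝ := fun t =>
    F (x + t • v) - t * ⟪gradient F x, v⟫ - L / 2 * t ^ 2 * ‖v‖ ^ 2 with hψ
  have hψderiv : ∀ t : ℝ, HasDerivAt ψ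
      (⟪gradient F (x + t • v), v⟫ - ⟪gradient F x, v⟫ - L * t * ‖v‖ ^ 2) t := by
    intro t
    have h3 : HasDerivAt (fun s : ℝ => s * ⟪gradient F x, v⟫) ⟪gradient F x, v⟫ t := by
      simpa using (hasDerivAt_id t).mul_const (⟪gradient F x, v⟫)
    have h4 : HasDerivAt (fun s : ℝ => L / 2 * s ^ 2 * ‖v‖ ^ 2) (L * t * ‖v‖ ^ 2) t := by
      have h5 := ((hasDerivAt_pow 2 t).const_mul (L / 2)).mul_const (‖v‖ ^ 2)
      exact h5.congr_deriv (by rw [show (2:ℕ) - 1 = 1 from rfl]; push_cast; ring)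
    simpa [hψ, Pi.sub_def] using ((hderiv t).sub h3).sub h4
  have hanti : AntitoneOn ψ (Set.Icc (0 : ℝ) 1) := by
    refine antitoneOn_of_deriv_nonpos (convex_Icc 0 1) ?_ ?_ ?_
    · exact fun t _ => (hψderiv t).continuousAt.continuousWithinAt
    · exact fun t _ => (hψderiv t).differentiableAt.differentiableWithinAt
    · intro t ht
      rw [interior_Icc] at ht
      rw [(hψderiv t).deriv]
      have h5 : ⟪gradient F (x + t • v) - gradient F x, v⟫ ≤ L * t * ‖v‖ ^ 2 := by
        calc ⟪gradient F (x + t • v) - gradient F x, v⟫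
            ≤ ‖gradient F (x + t • v) - gradient F x‖ * ‖v‖ := real_inner_le_norm _ _
          _ ≤ (L * ‖(x + t • v) - x‖) * ‖v‖ :=
              mul_le_mul_of_nonneg_right (hlip _ _) (norm_nonneg _)
          _ = L * t * ‖v‖ ^ 2 := by
              rw [add_sub_cancel_left, norm_smul, Real.norm_eq_abs, abs_of_pos ht.1]
              ring
      rw [inner_sub_left] at h5
      linarith
  have hm01 : ψ 1 ≤ ψ 0 :=
    hanti (Set.mem_Icc.mpr ⟨le_rfl, zero_le_one⟩) (Set.mem_Icc.mpr ⟨zero_le_one, le_rfl⟩)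
      zero_le_one
  have hxy : x + v = y := by rw [hv]; abel
  have h0 : ψ 0 = F x := by simp [hψ]
  have h1 : ψ 1 = F y - ⟪gradient F x, v⟫ - L / 2 * ‖v‖ ^ 2 := by
    simp [hψ, hxy]
  rw [h0, h1] at hm01
  linarith

private lemma condExpL2_ae_eq_condexp' {α : Type*} {m m0 : MeasurableSpace α} {μ : Measure α}
    [IsFiniteMeasure μ] (hm : m ≤ m0)
    {E : Type*} [NormedAddCommGroup E] [InnerProductSpace ℝ E] [CompleteSpace E]
    {f : α → E} (hf : MemLp f 2 μ) :
    (condExpL2 E ℝ hm (hf.toLp f) : α → E) =ᵐ[μ] μ[f|m] := by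
  refine ae_eq_condExp_of_forall_setIntegral_eq hm (hf.integrable one_le_two) ?_ ?_ ?_
  · exact fun s _ _ => (integrable_condExpL2_of_isFiniteMeasure hm).integrableOn
  · intro s hs hμs
    rw [integral_condExpL2_eq hm (hf.toLp f) hs hμs.ne]
    exact setIntegral_congr_ae (hm s hs) (hf.coeFn_toLp.mono fun ω hω _ => hω)
  · exact aestronglyMeasurable_condExpL2 hm _

private lemma integral_inner_eq_zero_of_condexp_eq_zero {α : Type*}
    {m m0 : MeasurableSpace α} {μ : Measure α} [IsFiniteMeasure μ] (hm : m ≤ m0)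
    {E : Type*} [NormedAddCommGroup E] [InnerProductSpace ℝ E] [CompleteSpace E]
    [MeasurableSpace E] [BorelSpace E]
    {X h : α → E} (hX : MemLp X 2 μ) (hXm : AEStronglyMeasurable[m] X μ)
    (hh : MemLp h 2 μ) (h0 : μ[h|m] =ᵐ[μ] 0) :
    ∫ ω, ⟪X ω, h ω⟫ ∂μ = 0 := by
  have hXe : AEStronglyMeasurable[m] (hX.toLp X : α → E) μ :=
    hXm.congr hX.coeFn_toLp.symm
  have key : inner (𝕜 := ℝ) ((condExpL2 E ℝ hm (hh.toLp h) : α →₂[μ] E)) (hX.toLp X)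
      = inner (𝕜 := ℝ) (hh.toLp h) (hX.toLp X) :=
    inner_condExpL2_eq_inner_fun hm _ _ hXe
  have hzero : (condExpL2 E ℝ hm (hh.toLp h) : α → E) =ᵐ[μ] (0 : α → E) :=
    (condExpL2_ae_eq_condexp' hm hh).trans h0
  rw [L2.inner_def, L2.inner_def] at key
  have h1 : ∫ ω, ⟪(condExpL2 E ℝ hm (hh.toLp h) : α → E) ω, (hX.toLp X : α → E) ω⟫ ∂μ
      = 0 := by
    rw [integral_congr_ae (g := fun _ => (0 : ℝ)) ?_]
    · simp
    · filter_upwards [hzero] with ω hω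
      rw [hω]
      exact inner_zero_left _
  have h2 : ∫ ω, ⟪X ω, h ω⟫ ∂μ
      = ∫ ω, ⟪(hh.toLp h : α → E) ω, (hX.toLp X : α → E) ω⟫ ∂μ := by
    refine integral_congr_ae ?_
    filter_upwards [hh.coeFn_toLp, hX.coeFn_toLp] with ω e1 e2
    rw [e1, e2, real_inner_comm]
  rw [h2, ← key, h1]
/-- Nonconvex convergence rate for pMixFed viewed as SGD with constant effective
step size `η ≤ 1/L`: if the stochastic gradients are conditionally unbiased with
conditional variance at most `σ²` given the past iterates, then
`(1/T) ∑_{t<T} E[‖∇F(θ^t)‖²] ≤ 2 (E[F(θ^0)] - F*) / (T η) + L η σ²`. -/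
theorem nonconvex_rate
    {E : Type*} [NormedAddCommGroup E] [InnerProductSpace ℝ E] [CompleteSpace E]
    [MeasurableSpace E] [BorelSpace E]
    {Ωs : Type*} [MeasureSpace Ωs]
    (hprob : IsProbabilityMeasure (volume : Measure Ωs))
    (F : E → ℝ) (hF : Differentiable ℝ F)
    (L : ℝ) (hL : 0 < L)
    (hlip : ∀ x y : E, ‖gradient F x - gradient F y‖ ≤ L * ‖x - y‖)
    (Fstar : ℝ) (hFstar : ∀ x, Fstar ≤ F x)
    (η : ℝ) (hη0 : 0 < η) (hηL : η ≤ 1 / L)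
    (T : ℕ) (hT : 1 ≤ T)
    (θ g : ℕ → Ωs → E) (σ : ℝ)
    -- the σ-algebra generated by the past iterates θ^0, …, θ^t
    (m : ℕ → MeasurableSpace Ωs)
    (hm : ∀ t, m t = ⨆ s ∈ Finset.range (t + 1), MeasurableSpace.comap (θ s) inferInstance)
    -- the update rule θ^{t+1} = θ^t - η • g^t
    (hupd : ∀ t < T, ∀ ω, θ (t + 1) ω = θ t ω - η • g t ω)
    -- integrability of all stated quantities
    (hg_int : ∀ t < T, Integrable (g t))
    (hgsq_int : ∀ t < T, Integrable (fun ω => ‖g t ω - gradient F (θ t ω)‖ ^ 2))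
    (hgradsq_int : ∀ t < T, Integrable (fun ω => ‖gradient F (θ t ω)‖ ^ 2))
    (hF_int : ∀ t ≤ T, Integrable (fun ω => F (θ t ω)))
    -- conditional unbiasedness: E[g^t | σ(θ^0,…,θ^t)] = ∇F(θ^t) a.s.
    (hcond_mean : ∀ t < T,
      (volume[g t | m t]) =ᵐ[volume] fun ω => gradient F (θ t ω))
    -- conditional variance bound: E[‖g^t - ∇F(θ^t)‖² | σ(θ^0,…,θ^t)] ≤ σ² a.s.
    (hcond_var : ∀ t < T,
      ∀ᵐ ω ∂(volume : Measure Ωs),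
        (volume[fun ω' => ‖g t ω' - gradient F (θ t ω')‖ ^ 2 | m t]) ω ≤ σ ^ 2) :
    (1 / (T : ℝ)) * ∑ t ∈ range T, ∫ ω, ‖gradient F (θ t ω)‖ ^ 2
      ≤ 2 * ((∫ ω, F (θ 0 ω)) - Fstar) / ((T : ℝ) * η) + L * η * σ ^ 2 := by
  classical
  haveI := hprob
  set m0 : MeasurableSpace Ωs := (inferInstance : MeasurableSpace Ωs) with hm0
  set I : ℕ → ℝ := fun t => ∫ ω, ‖gradient F (θ t ω)‖ ^ 2 with hI
  have hI_nonneg : ∀ t, 0 ≤ I t := fun t => integral_nonneg fun ω => sq_nonneg _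
  have hLη : L * η ≤ 1 := by
    rw [le_div_iff₀ hL] at hηL
    linarith
  have hconst : ∀ c : ℝ, (∫ _ω : Ωs, c) = c := by
    intro c
    simp [integral_const]
  -- the per-step descent inequality for "good" steps
  have key : ∀ t, t < T → m t ≤ m0 →
      (η / 2) * I t ≤ (∫ ω, F (θ t ω)) - (∫ ω, F (θ (t + 1) ω)) + L * η ^ 2 * σ ^ 2 / 2 := by
    intro t ht hmle
    have hXm : AEStronglyMeasurable[m t] (fun ω => gradient F (θ t ω)) volume :=
      AEStronglyMeasurable.congr
        (StronglyMeasurable.aestronglyMeasurable stronglyMeasurable_condExp)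
        (hcond_mean t ht)
    have hXsm : AEStronglyMeasurable (fun ω => gradient F (θ t ω)) volume := by
      obtain ⟨X₀, hX₀, heq⟩ := hXm
      exact ⟨X₀, hX₀.mono hmle, heq⟩
    have hX2 : MemLp (fun ω => gradient F (θ t ω)) 2 volume :=
      (memLp_two_iff_integrable_sq_norm hXsm).mpr (hgradsq_int t ht)
    have hXint : Integrable (fun ω => gradient F (θ t ω)) := hX2.integrable one_le_two
    have hh_sm : AEStronglyMeasurable (fun ω => g t ω - gradient F (θ t ω)) volume :=
      (hg_int t ht).aestronglyMeasurable.sub hXsm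
    have hh2 : MemLp (fun ω => g t ω - gradient F (θ t ω)) 2 volume :=
      (memLp_two_iff_integrable_sq_norm hh_sm).mpr (hgsq_int t ht)
    have hcond0 : (volume[fun ω => g t ω - gradient F (θ t ω) | m t]) =ᵐ[volume]
        (0 : Ωs → E) := by
      have hsub := condExp_sub (μ := volume) (m := m t) (hg_int t ht) hXint
      have hXc := condExp_of_aestronglyMeasurable' hmle hXm hXint
      show (volume[g t - (fun ω => gradient F (θ t ω)) | m t]) =ᵐ[volume] (0 : Ωs → E)
      filter_upwards [hsub, hXc, hcond_mean t ht] with ω h1 h2 h3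
      simp only [Pi.sub_apply] at h1
      simp [h1, h2, h3]
    have orth : ∫ ω, ⟪gradient F (θ t ω), g t ω - gradient F (θ t ω)⟫ = 0 :=
      integral_inner_eq_zero_of_condexp_eq_zero hmle hX2 hXm hh2 hcond0
    have hinner_int : Integrable
        (fun ω => ⟪gradient F (θ t ω), g t ω - gradient F (θ t ω)⟫) := by
      have h1 := L2.integrable_inner (𝕜 := ℝ) (hX2.toLp _) (hh2.toLp _)
      refine h1.congr ?_
      filter_upwards [hX2.coeFn_toLp, hh2.coeFn_toLp] with ω e1 e2
      rw [e1, e2]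
    -- inner product with the gradient integrates to I t
    have hinnerXg_int : Integrable (fun ω => ⟪gradient F (θ t ω), g t ω⟫) := by
      refine ((hgradsq_int t ht).add hinner_int).congr ?_
      refine Filter.Eventually.of_forall fun ω => ?_
      simp only [Pi.add_apply]
      rw [inner_sub_right, real_inner_self_eq_norm_sq]
      ring
    have hIg : ∫ ω, ⟪gradient F (θ t ω), g t ω⟫ = I t := by
      have e1 : ∫ ω, ⟪gradient F (θ t ω), g t ω⟫
          = ∫ ω, (‖gradient F (θ t ω)‖ ^ 2
              + ⟪gradient F (θ t ω), g t ω - gradient F (θ t ω)⟫) := by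
        refine integral_congr_ae (Filter.Eventually.of_forall fun ω => ?_)
        simp only [inner_sub_right, real_inner_self_eq_norm_sq]
        ring
      rw [e1, integral_add (hgradsq_int t ht) hinner_int, orth, hI]
      simp
    -- second moment of the stochastic gradient
    have hgsq_eq : ∀ ω, ‖g t ω‖ ^ 2 = ‖gradient F (θ t ω)‖ ^ 2
        + 2 * ⟪gradient F (θ t ω), g t ω - gradient F (θ t ω)⟫
        + ‖g t ω - gradient F (θ t ω)‖ ^ 2 := by
      intro ω
      rw [norm_sub_sq_real, inner_sub_right, real_inner_self_eq_norm_sq,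
        real_inner_comm (g t ω) (gradient F (θ t ω))]
      ring
    have hGsq_int : Integrable (fun ω => ‖g t ω‖ ^ 2) := by
      refine (((hgradsq_int t ht).add (hinner_int.const_mul 2)).add (hgsq_int t ht)).congr ?_
      exact Filter.Eventually.of_forall fun ω => (hgsq_eq ω).symm
    have hvar : ∫ ω, ‖g t ω - gradient F (θ t ω)‖ ^ 2 ≤ σ ^ 2 := by
      have h1 : ∫ ω, (volume[fun ω' => ‖g t ω' - gradient F (θ t ω')‖ ^ 2 | m t]) ω
          = ∫ ω, ‖g t ω - gradient F (θ t ω)‖ ^ 2 := integral_condExp hmle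
      have h2 : ∫ ω, (volume[fun ω' => ‖g t ω' - gradient F (θ t ω')‖ ^ 2 | m t]) ω
          ≤ ∫ _ω : Ωs, σ ^ 2 :=
        integral_mono_ae integrable_condExp (integrable_const _) (hcond_var t ht)
      rw [hconst] at h2
      linarith
    have hGsq : ∫ ω, ‖g t ω‖ ^ 2 ≤ I t + σ ^ 2 := by
      have hAB : Integrable (fun ω => ‖gradient F (θ t ω)‖ ^ 2
          + 2 * ⟪gradient F (θ t ω), g t ω - gradient F (θ t ω)⟫) volume :=
        (hgradsq_int t ht).add (hinner_int.const_mul 2)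
      have e1 : ∫ ω, ‖g t ω‖ ^ 2 = I t
          + 2 * (∫ ω, ⟪gradient F (θ t ω), g t ω - gradient F (θ t ω)⟫)
          + ∫ ω, ‖g t ω - gradient F (θ t ω)‖ ^ 2 := by
        rw [integral_congr_ae (Filter.Eventually.of_forall hgsq_eq),
          integral_add hAB (hgsq_int t ht),
          integral_add (hgradsq_int t ht) (hinner_int.const_mul 2), integral_const_mul]
      rw [e1, orth]
      simp only [mul_zero, add_zero]
      linarith [hvar]
    -- pointwise descent inequality
    have hdesc : ∀ ω, F (θ (t + 1) ω) ≤ F (θ t ω) - η * ⟪gradient F (θ t ω), g t ω⟫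
        + L * η ^ 2 / 2 * ‖g t ω‖ ^ 2 := by
      intro ω
      have hd := smooth_descent F hF L hL.le hlip (θ t ω) (θ (t + 1) ω)
      have hy : θ (t + 1) ω - θ t ω = -(η • g t ω) := by
        rw [hupd t ht ω]; abel
      rw [hy] at hd
      have e1 : ⟪gradient F (θ t ω), -(η • g t ω)⟫
          = -(η * ⟪gradient F (θ t ω), g t ω⟫) := by
        rw [inner_neg_right, real_inner_smul_right]
      have e2 : ‖-(η • g t ω)‖ ^ 2 = η ^ 2 * ‖g t ω‖ ^ 2 := by
        rw [norm_neg, norm_smul, Real.norm_eq_abs, mul_pow, sq_abs]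
      rw [e1, e2] at hd
      linarith
    have hFB : Integrable (fun ω => F (θ t ω)
        - η * ⟪gradient F (θ t ω), g t ω⟫) volume :=
      (hF_int t ht.le).sub (hinnerXg_int.const_mul η)
    have hRHS : Integrable (fun ω => F (θ t ω) - η * ⟪gradient F (θ t ω), g t ω⟫
        + L * η ^ 2 / 2 * ‖g t ω‖ ^ 2) volume := hFB.add (hGsq_int.const_mul _)
    have hint_le : (∫ ω, F (θ (t + 1) ω)) ≤ ∫ ω, (F (θ t ω)
        - η * ⟪gradient F (θ t ω), g t ω⟫ + L * η ^ 2 / 2 * ‖g t ω‖ ^ 2) :=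
      integral_mono (hF_int (t + 1) (by omega)) hRHS hdesc
    have hsplit : ∫ ω, (F (θ t ω) - η * ⟪gradient F (θ t ω), g t ω⟫
        + L * η ^ 2 / 2 * ‖g t ω‖ ^ 2)
        = (∫ ω, F (θ t ω)) - η * I t + L * η ^ 2 / 2 * ∫ ω, ‖g t ω‖ ^ 2 := by
      rw [integral_add hFB (hGsq_int.const_mul _),
        integral_sub (hF_int t ht.le) (hinnerXg_int.const_mul η),
        integral_const_mul, integral_const_mul, hIg]
    rw [hsplit] at hint_le
    nlinarith [mul_nonneg (mul_nonneg hη0.le (sub_nonneg.mpr hLη)) (hI_nonneg t),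
      mul_nonneg (by positivity : (0:ℝ) ≤ L * η ^ 2 / 2) (sub_nonneg.mpr hGsq)]
  -- monotonicity of the filtration
  have hmono : ∀ s t : ℕ, s ≤ t → m s ≤ m t := by
    intro s t hst
    rw [hm s, hm t]
    refine biSup_mono fun i hi => ?_
    rw [Finset.mem_range] at hi ⊢
    omega
  -- telescoping over good prefixes
  have tele : ∀ n, n ≤ T → (∀ t, t < n → m t ≤ m0) →
      (η / 2) * ∑ t ∈ range n, I t
        ≤ (∫ ω, F (θ 0 ω)) - (∫ ω, F (θ n ω)) + n * (L * η ^ 2 * σ ^ 2 / 2) := by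
    intro n
    induction n with
    | zero => intro _ _; simp
    | succ k ih =>
      intro hkT hgood
      have h1 := ih (by omega) fun t htk => hgood t (by omega)
      have h2 := key k (by omega) (hgood k (by omega))
      rw [Finset.sum_range_succ, mul_add]
      push_cast
      linarith
  have hFstar_le : ∀ n, n ≤ T → Fstar ≤ ∫ ω, F (θ n ω) := by
    intro n hn
    have h1 : (∫ _ω : Ωs, Fstar) ≤ ∫ ω, F (θ n ω) :=
      integral_mono (integrable_const _) (hF_int n hn) fun ω => hFstar (θ n ω)
    rwa [hconst] at h1
  have hTpos : (0 : ℝ) < T := by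
    have : (1 : ℝ) ≤ (T : ℝ) := by exact_mod_cast hT
    linarith
  -- main combined inequality
  have hmain : (η / 2) * ∑ t ∈ range T, I t
      ≤ ((∫ ω, F (θ 0 ω)) - Fstar) + T * (L * η ^ 2 * σ ^ 2 / 2) := by
    by_cases hgood : ∀ t, t < T → m t ≤ m0
    · have h1 := tele T le_rfl hgood
      have h2 := hFstar_le T le_rfl
      linarith
    · push_neg at hgood
      have hex : ∃ t, t < T ∧ ¬ m t ≤ m0 := hgood
      set t0 := Nat.find hex with ht0
      obtain ⟨ht0T, hbad0⟩ := Nat.find_spec hex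
      have hmin : ∀ t, t < t0 → m t ≤ m0 := by
        intro t htt0
        by_contra hc
        exact Nat.find_min hex htt0 ⟨htt0.trans ht0T, hc⟩
      have hσ : 0 ≤ σ ^ 2 := by
        have h1 := hcond_var t0 ht0T
        rw [condExp_of_not_le hbad0] at h1
        haveI : (ae (volume : Measure Ωs)).NeBot :=
          ae_neBot.mpr (IsProbabilityMeasure.ne_zero _)
        obtain ⟨ω, hω⟩ := h1.exists
        simpa using hω
      have hzeroI : ∀ t, t0 ≤ t → t < T → I t = 0 := by
        intro t htt0 htT
        have hbad : ¬ m t ≤ m0 := fun hle => hbad0 ((hmono t0 t htt0).trans hle)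
        have h1 : (fun ω => gradient F (θ t ω)) =ᵐ[volume] (fun _ => (0 : E)) := by
          have h2 := hcond_mean t htT
          rw [condExp_of_not_le hbad] at h2
          filter_upwards [h2] with ω hω
          exact hω.symm
        have h3 : (fun ω => ‖gradient F (θ t ω)‖ ^ 2) =ᵐ[volume] (fun _ => (0 : ℝ)) := by
          filter_upwards [h1] with ω hω
          simp [hω]
        rw [hI]
        simp only
        rw [integral_congr_ae h3]
        simp
      have hsum : ∑ t ∈ range T, I t = ∑ t ∈ range t0, I t := by
        refine (Finset.sum_subset (Finset.range_subset_range.mpr ht0T.le) ?_).symm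
        intro t htT htt0
        rw [Finset.mem_range] at htT
        rw [Finset.mem_range, not_lt] at htt0
        exact hzeroI t htt0 htT
      have h1 := tele t0 ht0T.le hmin
      have h2 := hFstar_le t0 ht0T.le
      have h3 : (t0 : ℝ) * (L * η ^ 2 * σ ^ 2 / 2) ≤ (T : ℝ) * (L * η ^ 2 * σ ^ 2 / 2) := by
        have : (t0 : ℝ) ≤ (T : ℝ) := by exact_mod_cast ht0T.le
        have hc : 0 ≤ L * η ^ 2 * σ ^ 2 / 2 := by positivity
        exact mul_le_mul_of_nonneg_right this hc
      clear hbad0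
      rw [hsum]
      linarith
  -- final algebra
  set S := ∑ t ∈ range T, I t with hS
  set D := (∫ ω, F (θ 0 ω)) - Fstar with hD
  have h2 : η * S ≤ 2 * D + (T : ℝ) * (L * η ^ 2 * σ ^ 2) := by linarith
  have hre : (1 / (T : ℝ)) * S = (η * S) / ((T : ℝ) * η) := by
    field_simp
  have hre2 : 2 * D / ((T : ℝ) * η) + L * η * σ ^ 2
      = (2 * D + (T : ℝ) * (L * η ^ 2 * σ ^ 2)) / ((T : ℝ) * η) := by
    field_simp
  calc (1 / (T : ℝ)) * S = (η * S) / ((T : ℝ) * η) := hre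
    _ ≤ (2 * D + (T : ℝ) * (L * η ^ 2 * σ ^ 2)) / ((T : ℝ) * η) := by
        exact div_le_div_of_nonneg_right h2 (by positivity)
    _ = 2 * D / ((T : ℝ) * η) + L * η * σ ^ 2 := hre2.symm
end

section
/- Let E be a real Hilbert space, F : E → ℝ differentiable, bounded below with infimum F* attained, and suppose F satisfies the Polyak–Łojasiewicz inequality with constant μ > 0: ‖∇F(θ)‖² ≥ 2μ(F(θ) − F*) for all θ ∈ E, and ∇F is L-Lipschitz (L > 0). Fix θ ∈ E and a step size η with 0 ≤ η ≤ 1/L and μ·η ≤ 1. Let g : Ω → E be an integrable random vector with E[g] = ∇F(θ) and E[‖g − ∇F(θ)‖²] ≤ σ². Then E[F(θ − η • g)] − F* ≤ (1 − μη)·(F(θ) − F*) + (L·η²/2)·σ². -/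
open MeasureTheory InnerProductSpace

lemma descent_lemma {E : Type*} [NormedAddCommGroup E] [InnerProductSpace ℝ E]
    [CompleteSpace E]
    (F : E → ℝ) (hF : Differentiable ℝ F) (L : ℝ) (hL : 0 ≤ L)
    (hlip : ∀ x y : E, ‖gradient F x - gradient F y‖ ≤ L * ‖x - y‖)
    (x y : E) :
    F y ≤ F x + ⟪gradient F x, y - x⟫_ℝ + L / 2 * ‖y - x‖ ^ 2 := by
  set d : E := y - x with hd
  set c : ℝ := ⟪gradient F x, d⟫_ℝ with hc
  set ψ : ℝ → ℝ := fun t => F (x + t • d) - t * c - L / 2 * ‖d‖ ^ 2 * t ^ 2 with hψ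
  have hderiv : ∀ t : ℝ, HasDerivAt ψ
      (⟪gradient F (x + t • d), d⟫_ℝ - c - L * ‖d‖ ^ 2 * t) t := by
    intro t
    have hpath : HasDerivAt (fun t : ℝ => x + t • d) d t := by
      simpa using ((hasDerivAt_id t).smul_const d).const_add x
    have h1 : HasDerivAt (fun t : ℝ => F (x + t • d))
        (⟪gradient F (x + t • d), d⟫_ℝ) t := by
      have hgr := (hF (x + t • d)).hasGradientAt
      rw [hasGradientAt_iff_hasFDerivAt] at hgr
      have h := hgr.comp_hasDerivAt t hpath
      simp only [InnerProductSpace.toDual_apply_apply] at h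
      exact h
    have h2 : HasDerivAt (fun t : ℝ => t * c) c t := hasDerivAt_mul_const c
    have h3 : HasDerivAt (fun t : ℝ => L / 2 * ‖d‖ ^ 2 * t ^ 2)
        (L * ‖d‖ ^ 2 * t) t := by
      have := (hasDerivAt_pow 2 t).const_mul (L / 2 * ‖d‖ ^ 2)
      refine this.congr_deriv ?_
      norm_num
      ring
    exact (h1.sub h2).sub h3
  have hanti : AntitoneOn ψ (Set.Icc (0:ℝ) 1) := by
    apply antitoneOn_of_deriv_nonpos (convex_Icc 0 1)
    · exact (Differentiable.continuous (fun t => (hderiv t).differentiableAt)).continuousOn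
    · intro t ht
      exact ((hderiv t).differentiableAt).differentiableWithinAt
    · intro t ht
      rw [interior_Icc] at ht
      rw [(hderiv t).deriv]
      have hb : ⟪gradient F (x + t • d) - gradient F x, d⟫_ℝ ≤ L * t * ‖d‖ ^ 2 := by
        calc ⟪gradient F (x + t • d) - gradient F x, d⟫_ℝ
            ≤ ‖gradient F (x + t • d) - gradient F x‖ * ‖d‖ :=
              real_inner_le_norm _ _
          _ ≤ (L * ‖(x + t • d) - x‖) * ‖d‖ := by
              gcongr; exact hlip _ _
          _ = L * t * ‖d‖ ^ 2 := by
              simp [norm_smul, abs_of_pos ht.1]; ring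
      have : ⟪gradient F (x + t • d), d⟫_ℝ - c = ⟪gradient F (x + t • d) - gradient F x, d⟫_ℝ := by
        rw [inner_sub_left]
      nlinarith [hb]
  have h01 := hanti (Set.left_mem_Icc.mpr one_pos.le) (Set.right_mem_Icc.mpr one_pos.le) one_pos.le
  have hxy : x + (1:ℝ) • d = y := by simp [hd]
  simp only [hψ, hxy] at h01
  norm_num at h01
  linarith

/-- One-step function-gap contraction under the Polyak–Łojasiewicz inequality:
if `F` is differentiable with `L`-Lipschitz gradient, attains its infimum `F*`,
satisfies the PL inequality `‖∇F(θ)‖² ≥ 2μ (F(θ) - F*)` with `μ > 0`, and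
`0 ≤ η ≤ 1/L`, `μ η ≤ 1`, then for an unbiased stochastic gradient `g` at `θ`
with variance at most `σ²`,
`E[F(θ - η g)] - F* ≤ (1 - μ η)(F(θ) - F*) + (L η² / 2) σ²`. -/
theorem one_step_pl_contraction
    {E : Type*} [NormedAddCommGroup E] [InnerProductSpace ℝ E] [CompleteSpace E]
    (F : E → ℝ) (hF : Differentiable ℝ F)
    (L : ℝ) (hL : 0 < L)
    (hlip : ∀ x y : E, ‖gradient F x - gradient F y‖ ≤ L * ‖x - y‖)
    (μ : ℝ) (hμ : 0 < μ)
    (Fstar : ℝ) (hlb : ∀ x, Fstar ≤ F x) (hattain : ∃ x, F x = Fstar)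
    (hPL : ∀ x : E, 2 * μ * (F x - Fstar) ≤ ‖gradient F x‖ ^ 2)
    (θ : E) (η : ℝ) (hη0 : 0 ≤ η) (hηL : η ≤ 1 / L) (hημ : μ * η ≤ 1)
    {Ωs : Type*} [MeasureSpace Ωs]
    (hprob : IsProbabilityMeasure (volume : Measure Ωs))
    (g : Ωs → E) (σ : ℝ)
    (hg_int : Integrable g)
    (hg_sq_int : Integrable (fun ω => ‖g ω - gradient F θ‖ ^ 2))
    (hF_int : Integrable (fun ω => F (θ - η • g ω)))
    (hg_mean : ∫ ω, g ω = gradient F θ)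
    (hg_var : ∫ ω, ‖g ω - gradient F θ‖ ^ 2 ≤ σ ^ 2) :
    (∫ ω, F (θ - η • g ω)) - Fstar
      ≤ (1 - μ * η) * (F θ - Fstar) + (L * η ^ 2 / 2) * σ ^ 2 := by
  set v : E := gradient F θ with hv
  -- pointwise descent bound
  have hpt : ∀ ω, F (θ - η • g ω)
      ≤ F θ - η * ⟪v, g ω⟫_ℝ + L * η ^ 2 / 2 * ‖g ω‖ ^ 2 := by
    intro ω
    have := descent_lemma F hF L hL.le hlip θ (θ - η • g ω)
    have hsub : θ - η • g ω - θ = -(η • g ω) := by abel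
    rw [hsub] at this
    have h1 : ⟪v, -(η • g ω)⟫_ℝ = -(η * ⟪v, g ω⟫_ℝ) := by
      rw [inner_neg_right, real_inner_smul_right]
    have h2 : ‖-(η • g ω)‖ ^ 2 = η ^ 2 * ‖g ω‖ ^ 2 := by
      rw [norm_neg, norm_smul, Real.norm_eq_abs, abs_of_nonneg hη0, mul_pow]
    rw [h1, h2] at this
    linarith
  -- integrability pieces
  have hia : Integrable (fun ω => g ω - v) := hg_int.sub (integrable_const v)
  have hi1 : Integrable (fun ω => ⟪v, g ω⟫_ℝ) := hg_int.const_inner v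
  have hi2 : Integrable (fun ω => ⟪v, g ω - v⟫_ℝ) := hia.const_inner v
  have hsq : ∀ ω, ‖g ω‖ ^ 2 = ‖g ω - v‖ ^ 2 + 2 * ⟪g ω - v, v⟫_ℝ + ‖v‖ ^ 2 := by
    intro ω
    have := norm_add_sq_real (g ω - v) v
    simpa using this
  have hi3 : Integrable (fun ω => ‖g ω‖ ^ 2) := by
    have : Integrable (fun ω => ‖g ω - v‖ ^ 2 + 2 * ⟪g ω - v, v⟫_ℝ + ‖v‖ ^ 2) :=
      (hg_sq_int.add ((hia.inner_const v).const_mul 2)).add (integrable_const _)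
    exact this.congr (Filter.Eventually.of_forall fun ω => (hsq ω).symm)
  -- mean of a is zero
  have hEa : (∫ ω, (g ω - v)) = 0 := by
    rw [integral_sub hg_int (integrable_const v), hg_mean, integral_const]
    simp
  -- integral computations
  have hEav : (∫ ω, ⟪v, g ω - v⟫_ℝ) = 0 := by
    rw [integral_inner hia v, hEa, inner_zero_right]
  set c : ℝ := L * η ^ 2 / 2 with hc
  set K : ℝ := F θ - η * ‖v‖ ^ 2 + c * ‖v‖ ^ 2 with hK
  have hdecomp : ∀ ω, F θ - η * ⟪v, g ω⟫_ℝ + c * ‖g ω‖ ^ 2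
      = K + (c * ‖g ω - v‖ ^ 2 + (2 * c - η) * ⟪v, g ω - v⟫_ℝ) := by
    intro ω
    have h1 : ⟪v, g ω⟫_ℝ = ⟪v, g ω - v⟫_ℝ + ‖v‖ ^ 2 := by
      rw [inner_sub_right, real_inner_self_eq_norm_sq]; ring
    have h2 : ⟪g ω - v, v⟫_ℝ = ⟪v, g ω - v⟫_ℝ := real_inner_comm _ _
    rw [hsq ω, h1, h2, hK]; ring
  have hint2 : Integrable (fun ω => c * ‖g ω - v‖ ^ 2 + (2 * c - η) * ⟪v, g ω - v⟫_ℝ) :=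
    (hg_sq_int.const_mul c).add (hi2.const_mul (2 * c - η))
  have hRHS_int : Integrable
      (fun ω => F θ - η * ⟪v, g ω⟫_ℝ + c * ‖g ω‖ ^ 2) := by
    refine ((integrable_const K).add hint2).congr
      (Filter.Eventually.of_forall fun ω => (hdecomp ω).symm)
  have hmono := integral_mono hF_int hRHS_int hpt
  have hERHS : (∫ ω, (F θ - η * ⟪v, g ω⟫_ℝ + c * ‖g ω‖ ^ 2))
      = K + c * (∫ ω, ‖g ω - v‖ ^ 2) := by
    calc (∫ ω, (F θ - η * ⟪v, g ω⟫_ℝ + c * ‖g ω‖ ^ 2))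
        = ∫ ω, (K + (c * ‖g ω - v‖ ^ 2 + (2 * c - η) * ⟪v, g ω - v⟫_ℝ)) := by
          exact integral_congr_ae (Filter.Eventually.of_forall hdecomp)
      _ = K + ((∫ ω, c * ‖g ω - v‖ ^ 2) + ∫ ω, (2 * c - η) * ⟪v, g ω - v⟫_ℝ) := by
          rw [integral_add (integrable_const K) hint2, integral_const,
            integral_add (hg_sq_int.const_mul c) (hi2.const_mul (2 * c - η))]
          simp
      _ = K + c * (∫ ω, ‖g ω - v‖ ^ 2) := by
          rw [integral_const_mul, integral_const_mul, hEav]; ring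
  rw [hERHS] at hmono
  -- final arithmetic
  set S : ℝ := ∫ ω, ‖g ω - v‖ ^ 2 with hS
  set V : ℝ := ‖v‖ ^ 2 with hV
  have hΔ : 0 ≤ F θ - Fstar := sub_nonneg.mpr (hlb θ)
  have hPLθ : 2 * μ * (F θ - Fstar) ≤ V := hPL θ
  have hLη : L * η ≤ 1 := by
    rw [div_eq_mul_inv] at hηL
    calc L * η ≤ L * (1 * L⁻¹) := by gcongr
      _ = 1 := by field_simp
  have hV0 : (0:ℝ) ≤ V := sq_nonneg _
  have hA : 0 ≤ η * (V - 2 * μ * (F θ - Fstar)) :=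
    mul_nonneg hη0 (by linarith)
  have hB : 0 ≤ (1 - L * η) * (η * V) :=
    mul_nonneg (by linarith) (mul_nonneg hη0 hV0)
  have hC : L * η ^ 2 / 2 * S ≤ L * η ^ 2 / 2 * σ ^ 2 := by
    have : (0:ℝ) ≤ L * η ^ 2 / 2 := by positivity
    exact mul_le_mul_of_nonneg_left hg_var this
  nlinarith [hA, hB, hC, hmono]
end

section
/- Let E be a real Hilbert space, F : E → ℝ differentiable with L-Lipschitz gradient (L > 0), attaining its infimum F* and satisfying the Polyak–Łojasiewicz inequality ‖∇F(θ)‖² ≥ 2μ(F(θ) − F*) with constant μ > 0. Fix 0 < η ≤ min(1/L, 1/(2μ)). Let θ^0, θ^1, … : Ω → E and g^0, g^1, … : Ω → E be random vectors on a probability space with θ^{t+1} = θ^t − η • g^t for all t, the conditional expectation of g^t given σ(θ^0,…,θ^t) equal to ∇F(θ^t) almost surely, and conditional variance E[‖g^t − ∇F(θ^t)‖² | σ(θ^0,…,θ^t)] ≤ σ² almost surely (all stated integrability holding), with θ^0 deterministic. Then for every t, E[F(θ^t)] − F* ≤ (1 − μη)^t·(F(θ^0) − F*) + L·η·σ²/(2μ).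 -/
open MeasureTheory
open scoped RealInnerProductSpace



section analytic
variable {E : Type*} [NormedAddCommGroup E] [InnerProductSpace ℝ E] [CompleteSpace E]

lemma pmix_grad_continuous {F : E → ℝ} {L : ℝ} (hL : 0 < L)
    (hlip : ∀ x y : E, ‖gradient F x - gradient F y‖ ≤ L * ‖x - y‖) :
    Continuous (gradient F) := by
  have : LipschitzWith (Real.toNNReal L) (gradient F) := by
    apply LipschitzWith.of_dist_le_mul
    intro x y
    rw [dist_eq_norm, dist_eq_norm, Real.coe_toNNReal L hL.le]
    exact hlip x y
  exact this.continuous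

lemma pmix_descent {F : E → ℝ} (hF : Differentiable ℝ F) {L : ℝ} (hL : 0 < L)
    (hlip : ∀ x y : E, ‖gradient F x - gradient F y‖ ≤ L * ‖x - y‖) (x v : E) :
    F (x + v) ≤ F x + ⟪gradient F x, v⟫ + L / 2 * ‖v‖ ^ 2 := by
  have hderiv : ∀ s : ℝ, HasDerivAt (fun s : ℝ => F (x + s • v))
      ⟪gradient F (x + s • v), v⟫ s := by
    intro s
    have h1 : HasDerivAt (fun s : ℝ => x + s • v) v s := by
      simpa using ((hasDerivAt_id s).smul_const v).const_add x
    have h2 : HasFDerivAt F ((InnerProductSpace.toDual ℝ E) (gradient F (x + s • v)))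
        (x + s • v) := hasGradientAt_iff_hasFDerivAt.mp (hF (x + s • v)).hasGradientAt
    simpa [Function.comp_def] using h2.comp_hasDerivAt s h1
  have hcontg : Continuous (gradient F) := pmix_grad_continuous hL hlip
  have hcont : Continuous fun s : ℝ => ⟪gradient F (x + s • v), v⟫ := by
    exact Continuous.inner (hcontg.comp (by continuity)) continuous_const
  have hFTC : F (x + v) - F x = ∫ s in (0:ℝ)..1, ⟪gradient F (x + s • v), v⟫ := by
    have h := intervalIntegral.integral_eq_sub_of_hasDerivAt
      (fun s _ => hderiv s) (hcont.intervalIntegrable 0 1)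
    simpa using h.symm
  have hbound : ∫ s in (0:ℝ)..1, ⟪gradient F (x + s • v), v⟫
      ≤ ∫ s in (0:ℝ)..1, (⟪gradient F x, v⟫ + L * s * ‖v‖ ^ 2) := by
    apply intervalIntegral.integral_mono_on (by norm_num) (hcont.intervalIntegrable 0 1)
      (by apply Continuous.intervalIntegrable; continuity)
    intro s hs
    have h2 : ⟪gradient F (x + s • v) - gradient F x, v⟫ ≤ L * s * ‖v‖ ^ 2 := by
      calc ⟪gradient F (x + s • v) - gradient F x, v⟫
          ≤ ‖gradient F (x + s • v) - gradient F x‖ * ‖v‖ := real_inner_le_norm _ _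
        _ ≤ (L * ‖(x + s • v) - x‖) * ‖v‖ := by
            have := hlip (x + s • v) x
            have hv : (0:ℝ) ≤ ‖v‖ := norm_nonneg _
            nlinarith [norm_nonneg (gradient F (x + s • v) - gradient F x)]
        _ = L * s * ‖v‖ ^ 2 := by
            rw [add_sub_cancel_left, norm_smul, Real.norm_of_nonneg hs.1]
            ring
    have h1 : ⟪gradient F (x + s • v), v⟫ - ⟪gradient F x, v⟫
        = ⟪gradient F (x + s • v) - gradient F x, v⟫ := (inner_sub_left _ _ _).symm
    linarith [h1 ▸ h2]
  have hint : ∫ s in (0:ℝ)..1, (⟪gradient F x, v⟫ + L * s * ‖v‖ ^ 2)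
      = ⟪gradient F x, v⟫ + L / 2 * ‖v‖ ^ 2 := by
    have heq : (fun s : ℝ => ⟪gradient F x, v⟫ + L * s * ‖v‖ ^ 2)
        = fun s : ℝ => ⟪gradient F x, v⟫ + (L * ‖v‖ ^ 2) * s := by
      funext s; ring
    rw [heq, intervalIntegral.integral_add (intervalIntegrable_const)
      ((intervalIntegral.intervalIntegrable_id).const_mul _),
      intervalIntegral.integral_const_mul, integral_id]
    simp; ring
  linarith

lemma pmix_grad_sq_le {F : E → ℝ} (hF : Differentiable ℝ F) {L : ℝ} (hL : 0 < L)
    (hlip : ∀ x y : E, ‖gradient F x - gradient F y‖ ≤ L * ‖x - y‖)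
    {Fstar : ℝ} (hlb : ∀ x, Fstar ≤ F x) (x : E) :
    ‖gradient F x‖ ^ 2 ≤ 2 * L * (F x - Fstar) := by
  have h := pmix_descent hF hL hlip x (-(L⁻¹ • gradient F x))
  have h2 := hlb (x + -(L⁻¹ • gradient F x))
  rw [inner_neg_right, real_inner_smul_right, real_inner_self_eq_norm_sq,
    norm_neg, norm_smul, Real.norm_eq_abs, abs_of_pos (inv_pos.mpr hL)] at h
  have hL' : L * L⁻¹ = 1 := mul_inv_cancel₀ hL.ne'
  have e : L / 2 * (L⁻¹ * ‖gradient F x‖) ^ 2 = L⁻¹ * ‖gradient F x‖ ^ 2 / 2 := by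
    field_simp
  rw [e] at h
  have h3 : L⁻¹ * ‖gradient F x‖ ^ 2 / 2 ≤ F x - Fstar := by linarith
  have h4 := mul_le_mul_of_nonneg_left h3 hL.le
  calc ‖gradient F x‖ ^ 2 = 2 * (L * (L⁻¹ * ‖gradient F x‖ ^ 2 / 2)) := by
        rw [show L * (L⁻¹ * ‖gradient F x‖ ^ 2 / 2) = (L * L⁻¹) * (‖gradient F x‖ ^ 2 / 2) by ring,
          hL']; ring
    _ ≤ 2 * (L * (F x - Fstar)) := by linarith
    _ = 2 * L * (F x - Fstar) := by ring

end analytic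


section cross
variable {E : Type*} [NormedAddCommGroup E] [InnerProductSpace ℝ E] [CompleteSpace E]

lemma pmix_cross_zero {Ωs : Type*} {m m0 : MeasurableSpace Ωs} (μ : Measure Ωs)
    [IsProbabilityMeasure μ] (hm : m ≤ m0)
    {h d : Ωs → E} (hh' : AEStronglyMeasurable[m] h μ)
    (hh2 : MemLp h 2 μ) (hd2 : MemLp d 2 μ)
    (hd_int : Integrable d μ)
    (hcond : μ[d|m] =ᵐ[μ] 0) :
    ∫ ω, ⟪h ω, d ω⟫ ∂μ = 0 := by
  set H : Lp E 2 μ := hh2.toLp h with hH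
  set D : Lp E 2 μ := hd2.toLp d with hD
  have hHae : H =ᵐ[μ] h := hh2.coeFn_toLp
  have hDae : D =ᵐ[μ] d := hd2.coeFn_toLp
  have hHm : AEStronglyMeasurable[m] (H : Ωs → E) μ := hh'.congr hHae.symm
  have hcl : (condExpL2 E ℝ hm D : Ωs → E) =ᵐ[μ] (μ)[d|m] := by
    refine ae_eq_condExp_of_forall_setIntegral_eq hm hd_int ?_ ?_ ?_
    · intro s _ _
      exact (integrable_condExpL2_of_isFiniteMeasure hm).integrableOn
    · intro s hs hμs
      rw [integral_condExpL2_eq hm D hs hμs.ne]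
      exact setIntegral_congr_ae (hm s hs) (hDae.mono fun ω hω _ => hω)
    · exact aestronglyMeasurable_condExpL2 hm D
  have hz : (condExpL2 E ℝ hm D : Ωs → E) =ᵐ[μ] 0 := hcl.trans hcond
  have key : (inner ℝ ((condExpL2 E ℝ hm D : Lp E 2 μ)) H : ℝ)
      = inner ℝ D H := inner_condExpL2_eq_inner_fun hm D H hHm
  have lhs0 : (inner ℝ ((condExpL2 E ℝ hm D : Lp E 2 μ)) H : ℝ) = 0 := by
    rw [L2.inner_def]
    have : (fun ω => ⟪(condExpL2 E ℝ hm D : Ωs → E) ω, H ω⟫) =ᵐ[μ]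
        (fun _ => (0:ℝ)) := by
      filter_upwards [hz] with ω hω
      simp [hω]
    rw [integral_congr_ae this]
    simp
  have hDH : (inner ℝ D H : ℝ) = ∫ ω, ⟪d ω, h ω⟫ ∂μ := by
    rw [L2.inner_def]
    refine integral_congr_ae ?_
    filter_upwards [hDae, hHae] with ω h1 h2
    rw [h1, h2]
  have hzero : ∫ ω, ⟪d ω, h ω⟫ ∂μ = 0 := by rw [← hDH, ← key, lhs0]
  have hc : (fun ω => ⟪h ω, d ω⟫) = fun ω => ⟪d ω, h ω⟫ := by
    funext ω; exact real_inner_comm _ _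
  rw [hc, hzero]

end cross


set_option maxHeartbeats 1000000 in
/-- Unrolled function-gap bound in the strongly convex (PL) convergence theorem:
under the PL inequality with constant `μ > 0`, `L`-Lipschitz gradient, step size
`0 < η ≤ min(1/L, 1/(2μ))`, conditionally unbiased stochastic gradients with
conditional variance at most `σ²`, and deterministic initialization `θ^0`,
`E[F(θ^t)] - F* ≤ (1 - μη)^t (F(θ^0) - F*) + L η σ² / (2μ)` for all `t`. -/
theorem strongly_convex_function_gap
    {E : Type*} [NormedAddCommGroup E] [InnerProductSpace ℝ E] [CompleteSpace E]
    [MeasurableSpace E] [BorelSpace E]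
    {Ωs : Type*} [MeasureSpace Ωs]
    (hprob : IsProbabilityMeasure (volume : Measure Ωs))
    (F : E → ℝ) (hF : Differentiable ℝ F)
    (L : ℝ) (hL : 0 < L)
    (hlip : ∀ x y : E, ‖gradient F x - gradient F y‖ ≤ L * ‖x - y‖)
    (μ : ℝ) (hμ : 0 < μ)
    (Fstar : ℝ) (hlb : ∀ x, Fstar ≤ F x) (hattain : ∃ x, F x = Fstar)
    (hPL : ∀ x : E, 2 * μ * (F x - Fstar) ≤ ‖gradient F x‖ ^ 2)
    (η : ℝ) (hη0 : 0 < η) (hηmin : η ≤ min (1 / L) (1 / (2 * μ)))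
    (θ g : ℕ → Ωs → E) (σ : ℝ)
    (θ0 : E) (hθ0 : ∀ ω, θ 0 ω = θ0)
    (m : ℕ → MeasurableSpace Ωs)
    (hm : ∀ t, m t = ⨆ s ∈ Finset.range (t + 1), MeasurableSpace.comap (θ s) inferInstance)
    (hupd : ∀ t, ∀ ω, θ (t + 1) ω = θ t ω - η • g t ω)
    (hg_int : ∀ t, Integrable (g t))
    (hgsq_int : ∀ t, Integrable (fun ω => ‖g t ω - gradient F (θ t ω)‖ ^ 2))
    (hF_int : ∀ t, Integrable (fun ω => F (θ t ω)))
    (hcond_mean : ∀ t,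
      (volume[g t | m t]) =ᵐ[volume] fun ω => gradient F (θ t ω))
    (hcond_var : ∀ t,
      ∀ᵐ ω ∂(volume : Measure Ωs),
        (volume[fun ω' => ‖g t ω' - gradient F (θ t ω')‖ ^ 2 | m t]) ω ≤ σ ^ 2) :
    ∀ t, (∫ ω, F (θ t ω)) - Fstar
      ≤ (1 - μ * η) ^ t * (F θ0 - Fstar) + L * η * σ ^ 2 / (2 * μ) := by
  haveI := hprob
  have hηL : η * L ≤ 1 := by
    have h1 : η ≤ 1 / L := le_trans hηmin (min_le_left _ _)
    rw [le_div_iff₀ hL] at h1; linarith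
  have hημ : μ * η ≤ 1 / 2 := by
    have h1 : η ≤ 1 / (2 * μ) := le_trans hηmin (min_le_right _ _)
    rw [le_div_iff₀ (by positivity)] at h1; linarith
  have hρ0 : (0:ℝ) ≤ 1 - μ * η := by linarith
  set K : ℝ := L * η * σ ^ 2 / (2 * μ) with hK
  have hK0 : 0 ≤ K := by positivity
  have hcontg : Continuous (gradient F) := pmix_grad_continuous hL hlip
  -- a.e. strong measurability of the iterates
  have hθAESM : ∀ t, AEStronglyMeasurable (θ t) (volume : Measure Ωs) := by
    intro t
    induction t with
    | zero =>
      exact aestronglyMeasurable_const.congr (Filter.Eventually.of_forall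
        fun ω => (hθ0 ω).symm)
    | succ t ih =>
      exact (ih.sub ((hg_int t).1.const_smul η)).congr (Filter.Eventually.of_forall
        fun ω => (hupd t ω).symm)
  -- trivial upper bound on ∫ F (θ t) by Fstar-integral
  have hFstar_int : ∫ (_ : Ωs), Fstar = Fstar := by simp
  have hδnn : ∀ t, 0 ≤ (∫ ω, F (θ t ω)) - Fstar := by
    intro t
    have := integral_mono (integrable_const Fstar) (hF_int t) (fun ω => hlb (θ t ω))
    rw [hFstar_int] at this; linarith
  -- the one-step descent inequality
  have step : ∀ t, m t ≤ (inferInstance : MeasurableSpace Ωs) →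
      (∫ ω, F (θ (t+1) ω)) - Fstar
        ≤ (1 - μ * η) * ((∫ ω, F (θ t ω)) - Fstar) + L * η ^ 2 * σ ^ 2 / 2 := by
    intro t hmle
    set h : Ωs → E := fun ω => gradient F (θ t ω) with hhdef
    set d : Ωs → E := fun ω => g t ω - gradient F (θ t ω) with hddef
    have hθm : Measurable[m t] (θ t) := by
      rw [measurable_iff_comap_le, hm t]
      exact le_biSup (fun s => MeasurableSpace.comap (θ s) inferInstance) (Finset.self_mem_range_succ t)
    have hhAESM : AEStronglyMeasurable h (volume : Measure Ωs) :=
      hcontg.comp_aestronglyMeasurable (hθAESM t)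
    have hbound_int : Integrable (fun ω => 2 * L * (F (θ t ω) - Fstar))
        (volume : Measure Ωs) := ((hF_int t).sub (integrable_const _)).const_mul _
    have hh2_int : Integrable (fun ω => ‖h ω‖ ^ 2) (volume : Measure Ωs) := by
      refine hbound_int.mono' ((hhAESM.norm.pow 2)) ?_
      refine Filter.Eventually.of_forall fun ω => ?_
      rw [Real.norm_of_nonneg (by positivity)]
      exact pmix_grad_sq_le hF hL hlip hlb (θ t ω)
    have hhL2 : MemLp h 2 (volume : Measure Ωs) :=
      (memLp_two_iff_integrable_sq_norm hhAESM).mpr hh2_int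
    have hh_int : Integrable h (volume : Measure Ωs) :=
      memLp_one_iff_integrable.mp (hhL2.mono_exponent (by norm_num))
    have hdAESM : AEStronglyMeasurable d (volume : Measure Ωs) := (hg_int t).1.sub hhAESM
    have hd2_int : Integrable (fun ω => ‖d ω‖ ^ 2) (volume : Measure Ωs) := hgsq_int t
    have hdL2 : MemLp d 2 (volume : Measure Ωs) :=
      (memLp_two_iff_integrable_sq_norm hdAESM).mpr hd2_int
    have hd_int : Integrable d (volume : Measure Ωs) := (hg_int t).sub hh_int
    -- m t - a.e. strong measurability of h
    have hhAESM' : AEStronglyMeasurable[m t] h (volume : Measure Ωs) := by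
      obtain ⟨θ', hθ'SM, hθθ'⟩ := hθAESM t
      set S : Set E := closure (Set.range θ') with hSdef
      have hSsep : TopologicalSpace.IsSeparable S := hθ'SM.isSeparable_range.closure
      have hSmeas : MeasurableSet S := isClosed_closure.measurableSet
      have hA : MeasurableSet[m t] (θ t ⁻¹' S) := hθm hSmeas
      set θ'' : Ωs → E := (θ t ⁻¹' S).indicator (θ t) with hθ''def
      have hθ''meas : Measurable[m t] θ'' := hθm.indicator hA
      have hsep'' : TopologicalSpace.IsSeparable (Set.range θ'') := by
        refine (hSsep.union ((Set.finite_singleton (0:E)).isSeparable)).mono ?_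
        rintro x ⟨ω, rfl⟩
        by_cases hω : ω ∈ θ t ⁻¹' S
        · left; rw [hθ''def, Set.indicator_of_mem hω (θ t)]; exact hω
        · right; rw [hθ''def, Set.indicator_of_notMem hω (θ t)]; exact rfl
      have hθ''SM : StronglyMeasurable[m t] θ'' :=
        stronglyMeasurable_iff_measurable_separable.mpr ⟨hθ''meas, hsep''⟩
      have hae : θ t =ᵐ[volume] θ'' := by
        filter_upwards [hθθ'] with ω hω
        have hmem : ω ∈ θ t ⁻¹' S := by
          simp only [Set.mem_preimage, hω]
          exact subset_closure (Set.mem_range_self ω)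
        rw [hθ''def, Set.indicator_of_mem hmem (θ t)]
      exact ⟨gradient F ∘ θ'', hcontg.comp_stronglyMeasurable hθ''SM, by
        filter_upwards [hae] with ω hω
        simp only [hhdef, Function.comp_apply, hω]⟩
    have hcondh : (volume : Measure Ωs)[h|m t] =ᵐ[volume] h :=
      condExp_of_aestronglyMeasurable' hmle hhAESM' hh_int
    have hcondd : (volume : Measure Ωs)[d|m t] =ᵐ[volume] 0 := by
      have hcd := condExp_sub (μ := (volume : Measure Ωs)) (m := m t) (hg_int t) hh_int
      have hdd : d = g t - h := rfl
      rw [hdd]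
      refine hcd.trans ?_
      filter_upwards [hcond_mean t, hcondh] with ω h1 h2
      simp only [Pi.sub_apply, h1, h2, Pi.zero_apply]
      exact sub_self _
    have hcross : ∫ ω, ⟪h ω, d ω⟫ = 0 :=
      pmix_cross_zero (volume : Measure Ωs) hmle hhAESM' hhL2 hdL2 hd_int hcondd
    -- conditional variance bound integrates
    have hvar : ∫ ω, ‖d ω‖ ^ 2 ≤ σ ^ 2 := by
      have h1 : ∫ ω, ‖d ω‖ ^ 2 =
          ∫ ω, ((volume : Measure Ωs)[fun ω' => ‖g t ω' - gradient F (θ t ω')‖ ^ 2|m t]) ω :=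
        (integral_condExp hmle).symm
      have h2 := integral_mono_ae integrable_condExp (integrable_const (σ ^ 2)) (hcond_var t)
      rw [integral_const] at h2
      simp only [measureReal_def, measure_univ, ENNReal.toReal_one, one_smul] at h2
      calc ∫ ω, ‖d ω‖ ^ 2 = _ := h1
        _ ≤ σ ^ 2 := h2
    -- pointwise descent
    have hinner_int : Integrable (fun ω => ⟪h ω, d ω⟫) (volume : Measure Ωs) := by
      refine ((hh2_int.add hd2_int).div_const 2).mono' (hhAESM.inner hdAESM) ?_
      refine Filter.Eventually.of_forall fun ω => ?_
      show ‖⟪h ω, d ω⟫‖ ≤ (‖h ω‖ ^ 2 + ‖d ω‖ ^ 2) / 2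
      have h1 := abs_real_inner_le_norm (h ω) (d ω)
      have h2 : ‖h ω‖ * ‖d ω‖ ≤ (‖h ω‖ ^ 2 + ‖d ω‖ ^ 2) / 2 := by
        nlinarith [sq_nonneg (‖h ω‖ - ‖d ω‖)]
      calc ‖⟪h ω, d ω⟫‖ = |⟪h ω, d ω⟫| := Real.norm_eq_abs _
        _ ≤ ‖h ω‖ * ‖d ω‖ := h1
        _ ≤ _ := h2
    have hdesc : ∀ ω, F (θ (t+1) ω) ≤ F (θ t ω) - (η - L * η ^ 2 / 2) * ‖h ω‖ ^ 2
        + (L * η ^ 2 - η) * ⟪h ω, d ω⟫ + L * η ^ 2 / 2 * ‖d ω‖ ^ 2 := by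
      intro ω
      have hdes := pmix_descent hF hL hlip (θ t ω) (-(η • g t ω))
      have hup : θ (t+1) ω = θ t ω + -(η • g t ω) := by rw [hupd t ω]; abel
      rw [← hup] at hdes
      have hgd : g t ω = h ω + d ω := by simp [hhdef, hddef]
      have e1 : ⟪gradient F (θ t ω), -(η • g t ω)⟫
          = -η * (‖h ω‖ ^ 2 + ⟪h ω, d ω⟫) := by
        rw [inner_neg_right, real_inner_smul_right, hgd, inner_add_right,
          real_inner_self_eq_norm_sq]
        ring_nf
        rfl
      have e2 : ‖-(η • g t ω)‖ ^ 2 = η ^ 2 * (‖h ω‖ ^ 2 + 2 * ⟪h ω, d ω⟫ + ‖d ω‖ ^ 2) := by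
        rw [norm_neg, norm_smul, Real.norm_eq_abs, hgd]
        rw [mul_pow, sq_abs, norm_add_sq_real]
      rw [e1, e2] at hdes
      linarith
    set c1 : ℝ := η - L * η ^ 2 / 2 with hc1
    set c2 : ℝ := L * η ^ 2 - η with hc2
    set c3 : ℝ := L * η ^ 2 / 2 with hc3
    have I12 : Integrable (fun ω => F (θ t ω) - c1 * ‖h ω‖ ^ 2) (volume : Measure Ωs) :=
      (hF_int t).sub (hh2_int.const_mul c1)
    have I123 : Integrable (fun ω => F (θ t ω) - c1 * ‖h ω‖ ^ 2 + c2 * ⟪h ω, d ω⟫)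
        (volume : Measure Ωs) := I12.add (hinner_int.const_mul c2)
    have IB : Integrable (fun ω => F (θ t ω) - c1 * ‖h ω‖ ^ 2 + c2 * ⟪h ω, d ω⟫
        + c3 * ‖d ω‖ ^ 2) (volume : Measure Ωs) := I123.add (hd2_int.const_mul c3)
    have hIle : ∫ ω, F (θ (t+1) ω) ≤ ∫ ω, (F (θ t ω) - c1 * ‖h ω‖ ^ 2 + c2 * ⟪h ω, d ω⟫
        + c3 * ‖d ω‖ ^ 2) := integral_mono (hF_int (t+1)) IB hdesc
    have hIB : ∫ ω, (F (θ t ω) - c1 * ‖h ω‖ ^ 2 + c2 * ⟪h ω, d ω⟫ + c3 * ‖d ω‖ ^ 2)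
        = (∫ ω, F (θ t ω)) - c1 * (∫ ω, ‖h ω‖ ^ 2) + c3 * ∫ ω, ‖d ω‖ ^ 2 := by
      rw [integral_add I123 (hd2_int.const_mul c3), integral_add I12 (hinner_int.const_mul c2),
        integral_sub (hF_int t) (hh2_int.const_mul c1), integral_const_mul, integral_const_mul,
        integral_const_mul, hcross]
      ring
    have hPLint : 2 * μ * ((∫ ω, F (θ t ω)) - Fstar) ≤ ∫ ω, ‖h ω‖ ^ 2 := by
      have h1 : ∫ ω, 2 * μ * (F (θ t ω) - Fstar) ≤ ∫ ω, ‖h ω‖ ^ 2 :=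
        integral_mono (((hF_int t).sub (integrable_const _)).const_mul _) hh2_int
          (fun ω => hPL (θ t ω))
      have h2 : ∫ ω, 2 * μ * (F (θ t ω) - Fstar)
          = 2 * μ * ((∫ ω, F (θ t ω)) - Fstar) := by
        rw [integral_const_mul, integral_sub (hF_int t) (integrable_const _), hFstar_int]
      linarith [h2 ▸ h1]
    have hIh0 : 0 ≤ ∫ ω, ‖h ω‖ ^ 2 := integral_nonneg fun ω => by positivity
    have hc1pos : η / 2 ≤ c1 := by rw [hc1]; nlinarith
    have hδt := hδnn t
    nlinarith [mul_le_mul_of_nonneg_left hvar (show (0:ℝ) ≤ c3 by rw [hc3]; positivity),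
      mul_le_mul_of_nonneg_left hPLint (show (0:ℝ) ≤ c1 by linarith [hc1pos]),
      mul_nonneg (show (0:ℝ) ≤ μ * η - μ * L * η ^ 2 by nlinarith) hδt]
  -- main induction, assuming measurability of the filtration
  have key : ∀ t, m t ≤ (inferInstance : MeasurableSpace Ωs) →
      (∫ ω, F (θ t ω)) - Fstar
        ≤ (1 - μ * η) ^ t * (F θ0 - Fstar) + K := by
    intro t
    induction t with
    | zero =>
      intro _
      have h0 : (∫ ω, F (θ 0 ω)) = F θ0 := by simp [hθ0]
      rw [h0, pow_zero, one_mul]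
      linarith
    | succ t ih =>
      intro hmle
      have hmono : m t ≤ m (t + 1) := by
        rw [hm t, hm (t + 1)]
        exact biSup_mono fun s hs => Finset.mem_range.mpr
          (lt_trans (Finset.mem_range.mp hs) (Nat.lt_succ_self _))
      have hmt : m t ≤ (inferInstance : MeasurableSpace Ωs) := le_trans hmono hmle
      have h1 := step t hmt
      have h2 := ih hmt
      have h3 := mul_le_mul_of_nonneg_left h2 hρ0
      have hKc : (1 - μ * η) * K + L * η ^ 2 * σ ^ 2 / 2 = K := by
        rw [hK]; field_simp; ring
      calc (∫ ω, F (θ (t+1) ω)) - Fstar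
          ≤ (1 - μ * η) * ((∫ ω, F (θ t ω)) - Fstar) + L * η ^ 2 * σ ^ 2 / 2 := h1
        _ ≤ (1 - μ * η) * ((1 - μ * η) ^ t * (F θ0 - Fstar) + K) + L * η ^ 2 * σ ^ 2 / 2 := by
            linarith
        _ = (1 - μ * η) ^ (t+1) * (F θ0 - Fstar) + ((1 - μ * η) * K + L * η ^ 2 * σ ^ 2 / 2) := by
            ring
        _ = (1 - μ * η) ^ (t+1) * (F θ0 - Fstar) + K := by rw [hKc]
  intro t
  by_cases hmle : m t ≤ (inferInstance : MeasurableSpace Ωs)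
  · exact key t hmle
  · -- degenerate case: the conditional expectation is zero, so the gradient vanishes a.e.
    have h0 : (volume : Measure Ωs)[g t|m t] = 0 := condExp_of_not_le hmle
    clear hmle
    have hgz : ∀ᵐ ω ∂(volume : Measure Ωs), gradient F (θ t ω) = 0 := by
      have := hcond_mean t
      rw [h0] at this
      filter_upwards [this] with ω hω
      exact hω.symm.trans rfl
    have hFz : ∀ᵐ ω ∂(volume : Measure Ωs), F (θ t ω) ≤ Fstar := by
      filter_upwards [hgz] with ω hω
      have := hPL (θ t ω)
      rw [hω] at this
      simp only [norm_zero] at this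
      nlinarith
    have hle : ∫ ω, F (θ t ω) ≤ Fstar := by
      have := integral_mono_ae (hF_int t) (integrable_const Fstar) hFz
      rwa [hFstar_int] at this
    have hrhs : 0 ≤ (1 - μ * η) ^ t * (F θ0 - Fstar) + K :=
      add_nonneg (mul_nonneg (pow_nonneg hρ0 t) (by linarith [hlb θ0])) hK0
    linarith
end
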